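/- arXiv:2002.09157 — 2 statements merged into one kernel-verified Lean document; each statement's English description precedes it below -/
import Mathlib

section
/- Let p : ℝ → ℝ be a C² function that is 2π-periodic, and set μ := p + p''. Then the signed area enclosed by the closed curve φ ↦ (p(φ)cos φ − p'(φ)sin φ, p(φ)sin φ + p'(φ)cos φ), computed as ½∫_0^{2π} (p(φ)cos φ − p'(φ)sin φ)·(p(φ)+p''(φ))·cos φ dφ, equals (1/8) ∫_0^{2π} ∫_0^{2π} μ(s₁) μ(s₂) sin|s₂ − s₁| ds₁ ds₂. -/
open Real

/-- **The determinantal mass formula in the plane** (Serre, Proposition 4.1,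
formula (4.3)). Let `p` be `C²` and `2π`-periodic and `μ = p + p''`. The signed area
enclosed by the curve `φ ↦ (p cos φ - p' sin φ, p sin φ + p' cos φ)`, computed as
`½ ∫_0^{2π} (p cos φ - p' sin φ)(p + p'') cos φ dφ`, equals
`(1/8) ∫_0^{2π} ∫_0^{2π} μ(s₁) μ(s₂) sin|s₂ - s₁| ds₁ ds₂`. -/
theorem determinantal_mass_formula_planar (p : ℝ → ℝ)
    (hp : ContDiff ℝ 2 p) (hper : Function.Periodic p (2 * π)) :
    (1 / 2) * ∫ φ in (0 : ℝ)..(2 * π),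
        (p φ * cos φ - deriv p φ * sin φ) * (p φ + deriv (deriv p) φ) * cos φ
      = (1 / 8) * ∫ s₁ in (0 : ℝ)..(2 * π), ∫ s₂ in (0 : ℝ)..(2 * π),
          (p s₁ + deriv (deriv p) s₁) * (p s₂ + deriv (deriv p) s₂) * sin |s₂ - s₁| := by
  set q := deriv p with hq_def
  set r := deriv q with hr_def
  have hp2' : ContDiff ℝ ((1:ℕ) + 1) p := by exact_mod_cast hp
  have hq_cd : ContDiff ℝ 1 q := (contDiff_succ_iff_deriv.mp hp2').2.2
  have hdp : ∀ x, HasDerivAt p (q x) x := fun x =>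
    ((hp.differentiable (by norm_num)) x).hasDerivAt
  have hdq : ∀ x, HasDerivAt q (r x) x := fun x =>
    ((hq_cd.differentiable (by norm_num)) x).hasDerivAt
  have hcp : Continuous p := hp.continuous
  have hcq : Continuous q := hq_cd.continuous
  have hcr : Continuous r := hq_cd.continuous_deriv le_rfl
  have hperq : Function.Periodic q (2 * π) := by
    intro x
    rw [hq_def, ← deriv_comp_add_const p (2 * π) x]
    congr 1
    funext y
    exact hper y
  have hp2 : p (2 * π) = p 0 := by simpa using hper 0
  have hq2 : q (2 * π) = q 0 := by simpa using hperq 0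
  have hcμ : Continuous (fun s => p s + r s) := hcp.add hcr
  have hpi : (0:ℝ) ≤ 2 * π := by positivity
  -- I1 : ∫ μ cos = 0
  have I1 : (∫ s in (0:ℝ)..(2*π), (p s + r s) * cos s) = 0 := by
    have hD : ∀ x ∈ Set.uIcc (0:ℝ) (2*π),
        HasDerivAt (fun s => q s * cos s + p s * sin s) ((p x + r x) * cos x) x := by
      intro x _
      have h1 := ((hdq x).mul (Real.hasDerivAt_cos x)).add ((hdp x).mul (Real.hasDerivAt_sin x))
      refine (h1.congr_deriv ?_).congr_of_eventuallyEq (Filter.Eventually.of_forall fun s => ?_)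
      ring
      rfl
    rw [intervalIntegral.integral_eq_sub_of_hasDerivAt hD
      ((hcμ.mul Real.continuous_cos).intervalIntegrable _ _)]
    simp [hq2, hp2]
  -- I2 : ∫ μ sin = 0
  have I2 : (∫ s in (0:ℝ)..(2*π), (p s + r s) * sin s) = 0 := by
    have hD : ∀ x ∈ Set.uIcc (0:ℝ) (2*π),
        HasDerivAt (fun s => q s * sin s - p s * cos s) ((p x + r x) * sin x) x := by
      intro x _
      have h1 := ((hdq x).mul (Real.hasDerivAt_sin x)).sub ((hdp x).mul (Real.hasDerivAt_cos x))
      refine (h1.congr_deriv ?_).congr_of_eventuallyEq (Filter.Eventually.of_forall fun s => ?_)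
      ring
      rfl
    rw [intervalIntegral.integral_eq_sub_of_hasDerivAt hD
      ((hcμ.mul Real.continuous_sin).intervalIntegrable _ _)]
    simp [hq2, hp2]
  -- I3 : ∫ μ (p cos 2φ - q sin 2φ) = 0
  have I3 : (∫ s in (0:ℝ)..(2*π),
      (p s + r s) * (p s * cos (2*s) - q s * sin (2*s))) = 0 := by
    have hD : ∀ x ∈ Set.uIcc (0:ℝ) (2*π),
        HasDerivAt (fun s => p s * q s * cos (2*s) - q s ^ 2 / 2 * sin (2*s)
            + p s ^ 2 / 2 * sin (2*s))
          ((p x + r x) * (p x * cos (2*x) - q x * sin (2*x))) x := by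
      intro x _
      have hid2 : HasDerivAt (fun s : ℝ => 2 * s) 2 x := by
        simpa using (hasDerivAt_id x).const_mul (2:ℝ)
      have hc2 : HasDerivAt (fun s : ℝ => cos (2*s)) (-sin (2*x) * 2) x :=
        (Real.hasDerivAt_cos (2*x)).comp x hid2
      have hs2 : HasDerivAt (fun s : ℝ => sin (2*s)) (cos (2*x) * 2) x :=
        (Real.hasDerivAt_sin (2*x)).comp x hid2
      have h1 := ((((hdp x).mul (hdq x)).mul hc2).sub
          ((((hdq x).mul (hdq x)).div_const 2).mul hs2)).add
          ((((hdp x).mul (hdp x)).div_const 2).mul hs2)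
      refine (h1.congr_deriv ?_).congr_of_eventuallyEq (Filter.Eventually.of_forall fun s => ?_)
      all_goals (simp only [Pi.mul_apply, Pi.sub_apply, Pi.add_apply]; ring)
    have hi3 : IntervalIntegrable
        (fun s => (p s + r s) * (p s * cos (2*s) - q s * sin (2*s)))
        MeasureTheory.volume 0 (2*π) := by
      apply Continuous.intervalIntegrable
      fun_prop
    rw [intervalIntegral.integral_eq_sub_of_hasDerivAt hD hi3]
    simp [hq2, hp2, Real.sin_two_mul, Real.cos_two_mul]
    ring
  set M := ∫ s in (0:ℝ)..(2*π), (p s + r s) * p s with hM_def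
  have hiM : IntervalIntegrable (fun s => (p s + r s) * p s) MeasureTheory.volume 0 (2*π) :=
    (hcμ.mul hcp).intervalIntegrable _ _
  -- LHS computation
  have LHS : (∫ φ in (0:ℝ)..(2*π),
      (p φ * cos φ - q φ * sin φ) * (p φ + r φ) * cos φ) = (1/2) * M := by
    have heq : Set.EqOn
        (fun φ => (p φ * cos φ - q φ * sin φ) * (p φ + r φ) * cos φ)
        (fun φ => (1/2) * ((p φ + r φ) * p φ)
          + (1/2) * ((p φ + r φ) * (p φ * cos (2*φ) - q φ * sin (2*φ))))
        (Set.uIcc (0:ℝ) (2*π)) := by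
      intro φ _
      simp only
      rw [cos_two_mul, sin_two_mul]
      ring
    have hiA : IntervalIntegrable (fun φ => (1:ℝ)/2 * ((p φ + r φ) * p φ))
        MeasureTheory.volume 0 (2*π) := by
      apply Continuous.intervalIntegrable
      fun_prop
    have hiB : IntervalIntegrable
        (fun φ => (1:ℝ)/2 * ((p φ + r φ) * (p φ * cos (2*φ) - q φ * sin (2*φ))))
        MeasureTheory.volume 0 (2*π) := by
      apply Continuous.intervalIntegrable
      fun_prop
    rw [intervalIntegral.integral_congr heq,
      intervalIntegral.integral_add hiA hiB,
      intervalIntegral.integral_const_mul, intervalIntegral.integral_const_mul, I3, hM_def]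
    ring
  -- Inner integral of the RHS
  have hF : ∀ t ∈ Set.uIcc (0:ℝ) (2*π),
      (∫ s in (0:ℝ)..(2*π), (p s + r s) * sin |s - t|)
        = 2 * (p t - p 0 * cos t - q 0 * sin t) := by
    intro t ht
    rw [Set.uIcc_of_le hpi] at ht
    obtain ⟨ht0, ht2⟩ := ht
    have hcont : Continuous (fun s => (p s + r s) * sin |s - t|) :=
      hcμ.mul (Real.continuous_sin.comp ((continuous_id.sub continuous_const).abs))
    have hsplit : (∫ s in (0:ℝ)..(2*π), (p s + r s) * sin |s - t|)
        = (∫ s in (0:ℝ)..t, (p s + r s) * sin |s - t|)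
          + ∫ s in t..(2*π), (p s + r s) * sin |s - t| :=
      (intervalIntegral.integral_add_adjacent_intervals
        (hcont.intervalIntegrable _ _) (hcont.intervalIntegrable _ _)).symm
    have hJ1 : (∫ s in (0:ℝ)..t, (p s + r s) * sin |s - t|)
        = p t - q 0 * sin t - p 0 * cos t := by
      have heq : Set.EqOn (fun s => (p s + r s) * sin |s - t|)
          (fun s => (p s + r s) * sin (t - s)) (Set.uIcc (0:ℝ) t) := by
        intro s hs
        rw [Set.uIcc_of_le ht0] at hs
        simp only
        rw [abs_of_nonpos (sub_nonpos.mpr hs.2), neg_sub]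
      rw [intervalIntegral.integral_congr heq]
      have hD : ∀ x ∈ Set.uIcc (0:ℝ) t,
          HasDerivAt (fun s => q s * sin (t - s) + p s * cos (t - s))
            ((p x + r x) * sin (t - x)) x := by
        intro x _
        have hst : HasDerivAt (fun s : ℝ => sin (t - s)) (cos (t - x) * (0 - 1)) x :=
          (Real.hasDerivAt_sin (t - x)).comp x ((hasDerivAt_const x t).sub (hasDerivAt_id x))
        have hct : HasDerivAt (fun s : ℝ => cos (t - s)) (-sin (t - x) * (0 - 1)) x :=
          (Real.hasDerivAt_cos (t - x)).comp x ((hasDerivAt_const x t).sub (hasDerivAt_id x))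
        have h1 := ((hdq x).mul hst).add ((hdp x).mul hct)
        refine (h1.congr_deriv ?_).congr_of_eventuallyEq (Filter.Eventually.of_forall fun s => ?_)
        ring
        rfl
      rw [intervalIntegral.integral_eq_sub_of_hasDerivAt hD
        ((hcμ.mul (Real.continuous_sin.comp
          (continuous_const.sub continuous_id))).intervalIntegrable _ _)]
      simp
      ring
    have hJ2 : (∫ s in t..(2*π), (p s + r s) * sin |s - t|)
        = p t - q 0 * sin t - p 0 * cos t := by
      have heq : Set.EqOn (fun s => (p s + r s) * sin |s - t|)
          (fun s => (p s + r s) * sin (s - t)) (Set.uIcc t (2*π)) := by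
        intro s hs
        rw [Set.uIcc_of_le ht2] at hs
        simp only
        rw [abs_of_nonneg (sub_nonneg.mpr hs.1)]
      rw [intervalIntegral.integral_congr heq]
      have hD : ∀ x ∈ Set.uIcc t (2*π),
          HasDerivAt (fun s => q s * sin (s - t) - p s * cos (s - t))
            ((p x + r x) * sin (x - t)) x := by
        intro x _
        have hst : HasDerivAt (fun s : ℝ => sin (s - t)) (cos (x - t) * 1) x :=
          ((hasDerivAt_id' x).sub_const t).sin
        have hct : HasDerivAt (fun s : ℝ => cos (s - t)) (-sin (x - t) * 1) x :=
          ((hasDerivAt_id' x).sub_const t).cos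
        have h1 := ((hdq x).mul hst).sub ((hdp x).mul hct)
        refine (h1.congr_deriv ?_).congr_of_eventuallyEq (Filter.Eventually.of_forall fun s => ?_)
        ring
        rfl
      rw [intervalIntegral.integral_eq_sub_of_hasDerivAt hD
        ((hcμ.mul (Real.continuous_sin.comp
          (continuous_id.sub continuous_const))).intervalIntegrable _ _)]
      simp [hq2, hp2, Real.sin_sub, Real.cos_sub]
      ring
    rw [hsplit, hJ1, hJ2]
    ring
  -- RHS computation
  have hRHSeq : Set.EqOn
      (fun s₁ => ∫ s₂ in (0:ℝ)..(2*π), (p s₁ + r s₁) * (p s₂ + r s₂) * sin |s₂ - s₁|)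
      (fun s₁ => 2 * ((p s₁ + r s₁) * p s₁) + ((-2) * p 0) * ((p s₁ + r s₁) * cos s₁)
        + ((-2) * q 0) * ((p s₁ + r s₁) * sin s₁))
      (Set.uIcc (0:ℝ) (2*π)) := by
    intro s₁ hs₁
    simp only
    have h1 : (∫ s₂ in (0:ℝ)..(2*π), (p s₁ + r s₁) * (p s₂ + r s₂) * sin |s₂ - s₁|)
        = (p s₁ + r s₁) * ∫ s₂ in (0:ℝ)..(2*π), (p s₂ + r s₂) * sin |s₂ - s₁| := by
      simp only [mul_assoc]
      exact intervalIntegral.integral_const_mul _ _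
    rw [h1, hF s₁ hs₁]
    ring
  have RHS : (∫ s₁ in (0:ℝ)..(2*π), ∫ s₂ in (0:ℝ)..(2*π),
      (p s₁ + r s₁) * (p s₂ + r s₂) * sin |s₂ - s₁|) = 2 * M := by
    have hiA : IntervalIntegrable (fun s => (2:ℝ) * ((p s + r s) * p s))
        MeasureTheory.volume 0 (2*π) := by
      apply Continuous.intervalIntegrable
      fun_prop
    have hiB : IntervalIntegrable (fun s => ((-2:ℝ) * p 0) * ((p s + r s) * cos s))
        MeasureTheory.volume 0 (2*π) := by
      apply Continuous.intervalIntegrable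
      fun_prop
    have hiC : IntervalIntegrable (fun s => ((-2:ℝ) * q 0) * ((p s + r s) * sin s))
        MeasureTheory.volume 0 (2*π) := by
      apply Continuous.intervalIntegrable
      fun_prop
    rw [intervalIntegral.integral_congr hRHSeq,
      intervalIntegral.integral_add (hiA.add hiB) hiC,
      intervalIntegral.integral_add hiA hiB,
      intervalIntegral.integral_const_mul, intervalIntegral.integral_const_mul,
      intervalIntegral.integral_const_mul, I1, I2, hM_def]
    ring
  rw [LHS, RHS]
  ring
end

section
/- Let V, W, Z ∈ ℝ²∖{0} satisfy V + W + Z = 0, and write V = |V|(cos α, sin α), W = |W|(cos β, sin β), Z = |Z|(cos γ, sin γ) with 0 ≤ α < β < γ < 2π. Then β − α ∈ (0,π), γ − β ∈ (0,π), γ − α ∈ (π, 2π), and (1/4)( |V|·|W| sin(β−α) + |W|·|Z| sin(γ−β) + |Z|·|V| sin(γ−α) ) = (1/4) |det(V,W)|, where det(V,W) = V₁W₂ − V₂W₁. Equivalently, the determinantal mass at the meeting point of the divergence-free tensor Λ = S^V + S^W + S^Z formed by three converging lines of directions V, W, Z equals (1/4)|det(V,W)|, an expression symmetric in V, W, Z.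 -/
open Real

private lemma sin_pos_lt_pi_of_lt_two_pi {x : ℝ} (h2 : x < 2 * π) (hs : 0 < sin x) :
    x < π := by
  by_contra h
  push_neg at h
  have h' : 0 ≤ x - π := by linarith
  have hnn : 0 ≤ sin (x - π) := sin_nonneg_of_nonneg_of_le_pi h' (by linarith)
  have : sin x ≤ 0 := by
    rw [show x = x - π + π by ring, sin_add_pi]
    linarith
  linarith

/-- **Determinantal mass of three converging lines** (Serre, Corollary 4.1).
Let `V, W, Z ∈ ℝ²∖{0}` satisfy `V + W + Z = 0`, with polar angles
`0 ≤ α < β < γ < 2π`. Then `β - α ∈ (0,π)`, `γ - β ∈ (0,π)`, `γ - α ∈ (π, 2π)`, and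
`¼(|V||W| sin(β-α) + |W||Z| sin(γ-β) + |Z||V| sin(γ-α)) = ¼ |det(V,W)|`;
this quantity is the determinantal mass of `Λ = S^V + S^W + S^Z` at the meeting point
and is symmetric in `V, W, Z`. -/
theorem determinantal_mass_three_lines (V W Z : EuclideanSpace ℝ (Fin 2))
    (hV : V ≠ 0) (hW : W ≠ 0) (hZ : Z ≠ 0) (hsum : V + W + Z = 0)
    (α β γ : ℝ) (hα : 0 ≤ α) (hαβ : α < β) (hβγ : β < γ) (hγ : γ < 2 * π)
    (hVpolar : V 0 = ‖V‖ * cos α ∧ V 1 = ‖V‖ * sin α)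
    (hWpolar : W 0 = ‖W‖ * cos β ∧ W 1 = ‖W‖ * sin β)
    (hZpolar : Z 0 = ‖Z‖ * cos γ ∧ Z 1 = ‖Z‖ * sin γ) :
    β - α ∈ Set.Ioo 0 π ∧ γ - β ∈ Set.Ioo 0 π ∧ γ - α ∈ Set.Ioo π (2 * π) ∧
    (1 / 4) * (‖V‖ * ‖W‖ * sin (β - α) + ‖W‖ * ‖Z‖ * sin (γ - β)
        + ‖Z‖ * ‖V‖ * sin (γ - α))
      = (1 / 4) * |V 0 * W 1 - V 1 * W 0| := by
  obtain ⟨hV0, hV1⟩ := hVpolar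
  obtain ⟨hW0, hW1⟩ := hWpolar
  obtain ⟨hZ0, hZ1⟩ := hZpolar
  have ha : 0 < ‖V‖ := norm_pos_iff.mpr hV
  have hb : 0 < ‖W‖ := norm_pos_iff.mpr hW
  have hc : 0 < ‖Z‖ := norm_pos_iff.mpr hZ
  have h0 : V 0 + W 0 + Z 0 = 0 := by simpa using congrArg (fun x => x 0) hsum
  have h1 : V 1 + W 1 + Z 1 = 0 := by simpa using congrArg (fun x => x 1) hsum
  have e1 : V 0 * W 1 - V 1 * W 0 = ‖V‖ * ‖W‖ * sin (β - α) := by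
    rw [hV0, hV1, hW0, hW1, sin_sub]; ring
  have e2 : W 0 * Z 1 - W 1 * Z 0 = ‖W‖ * ‖Z‖ * sin (γ - β) := by
    rw [hW0, hW1, hZ0, hZ1, sin_sub]; ring
  have e3 : Z 0 * V 1 - Z 1 * V 0 = -(‖Z‖ * ‖V‖ * sin (γ - α)) := by
    rw [hV0, hV1, hZ0, hZ1, sin_sub]; ring
  have hz0 : Z 0 = -(V 0 + W 0) := by linarith
  have hz1 : Z 1 = -(V 1 + W 1) := by linarith
  have d12 : V 0 * W 1 - V 1 * W 0 = W 0 * Z 1 - W 1 * Z 0 := by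
    rw [hz0, hz1]; ring
  have d13 : V 0 * W 1 - V 1 * W 0 = Z 0 * V 1 - Z 1 * V 0 := by
    rw [hz0, hz1]; ring
  have E2 : ‖W‖ * ‖Z‖ * sin (γ - β) = ‖V‖ * ‖W‖ * sin (β - α) := by
    rw [← e1, ← e2, d12]
  have E3 : ‖Z‖ * ‖V‖ * sin (γ - α) = -(‖V‖ * ‖W‖ * sin (β - α)) := by
    have := d13.trans e3
    linarith
  -- sin (β - α) > 0
  have hs1 : 0 < sin (β - α) := by
    by_contra h
    push_neg at h
    have hD : ‖V‖ * ‖W‖ * sin (β - α) ≤ 0 :=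
      mul_nonpos_of_nonneg_of_nonpos (mul_nonneg ha.le hb.le) h
    have hgb : sin (γ - β) ≤ 0 := by
      by_contra hpos
      push_neg at hpos
      have := mul_pos (mul_pos hb hc) hpos
      linarith
    have hba : π ≤ β - α := by
      by_contra hlt
      push_neg at hlt
      exact absurd (sin_pos_of_pos_of_lt_pi (by linarith) hlt) (by linarith)
    have hgb' : π ≤ γ - β := by
      by_contra hlt
      push_neg at hlt
      exact absurd (sin_pos_of_pos_of_lt_pi (by linarith) hlt) (by linarith)
    linarith
  have hD : 0 < ‖V‖ * ‖W‖ * sin (β - α) := mul_pos (mul_pos ha hb) hs1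
  have hs2 : 0 < sin (γ - β) := by
    by_contra hpos
    push_neg at hpos
    have := mul_nonpos_of_nonneg_of_nonpos (mul_nonneg hb.le hc.le) hpos
    linarith
  have hs3 : sin (γ - α) < 0 := by
    by_contra hpos
    push_neg at hpos
    have := mul_nonneg (mul_nonneg hc.le ha.le) hpos
    linarith
  have hba : β - α < π := sin_pos_lt_pi_of_lt_two_pi (by linarith) hs1
  have hgb : γ - β < π := sin_pos_lt_pi_of_lt_two_pi (by linarith) hs2
  have hga : π < γ - α := by
    by_contra h
    push_neg at h
    exact absurd (sin_nonneg_of_nonneg_of_le_pi (by linarith) h) (by linarith)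
  refine ⟨⟨by linarith, hba⟩, ⟨by linarith, hgb⟩, ⟨hga, by linarith⟩, ?_⟩
  rw [e1, abs_of_pos (by positivity)]
  linarith
end
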